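/- Let $p > 1$, $\alpha > 0$, $\zeta = (p-1)^2 p^{-p/(p-1)}$, and define $u(r,t) = t^{-\alpha/p} \exp(-\zeta (r/t^{1/p})^{p/(p-1)})$ for $r > 0$, $t > 0$. Then for all $r, t > 0$: $\partial_t u(r,t) = -r^{1-\alpha} \partial_r\left( r^{\alpha-1} \left( -\partial_r \left( u(r,t)^{1/(p-1)} \right) \right)^{p-1} \right)$. -/

import Mathlib

open Real

theorem stmt_3 (p α ζ : ℝ) (hp : 1 < p) (hα : 0 < α)
    (hζ : ζ = (p - 1) ^ (2 : ℕ) * p ^ (-p / (p - 1)))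
    (u : ℝ → ℝ → ℝ)
    (hu : ∀ r t : ℝ, u r t = t ^ (-α / p) * Real.exp (-ζ * (r / t ^ (1 / p)) ^ (p / (p - 1)))) :
    ∀ r t : ℝ, 0 < r → 0 < t →
      deriv (fun t' => u r t') t
        = -r ^ (1 - α) *
          deriv (fun r' => r' ^ (α - 1) *
            (-(deriv (fun r'' => (u r'' t) ^ (1 / (p - 1))) r')) ^ (p - 1)) r := by
  intro r t hr ht
  have hp1 : (0:ℝ) < p - 1 := by linarith
  have hp0 : (0:ℝ) < p := by linarith
  set q : ℝ := p / (p - 1) with hq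
  have hq1 : (1:ℝ) ≤ q := by rw [hq, le_div_iff₀ hp1]; linarith
  have hζpos : 0 < ζ := by
    rw [hζ]; positivity
  have hA : (0:ℝ) < t ^ (-α / p) := rpow_pos_of_pos ht _
  have hB : (0:ℝ) < t ^ (-(q / p)) := rpow_pos_of_pos ht _
  -- split the quotient power
  have hsplit : ∀ s t' : ℝ, 0 < s → 0 < t' →
      (s / t' ^ (1 / p)) ^ q = s ^ q * t' ^ (-(q / p)) := by
    intro s t' hs ht'
    rw [div_rpow hs.le (rpow_nonneg ht'.le _), ← rpow_mul ht'.le,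
      show 1 / p * q = q / p by ring, rpow_neg ht'.le, div_eq_mul_inv]
  -- closed form of the inner function
  have hUform : ∀ s : ℝ, 0 < s → (u s t) ^ (1 / (p - 1)) =
      (t ^ (-α / p)) ^ (1 / (p - 1)) *
        Real.exp (-(ζ / (p - 1) * t ^ (-(q / p))) * s ^ q) := by
    intro s hs
    rw [hu, hsplit s t hs ht, mul_rpow (rpow_nonneg ht.le _) (exp_pos _).le, ← exp_mul]
    congr 1
    ring
  -- derivative of the inner function
  have hInner : ∀ s : ℝ, 0 < s →
      HasDerivAt (fun s' => (u s' t) ^ (1 / (p - 1)))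
        ((t ^ (-α / p)) ^ (1 / (p - 1)) *
          (Real.exp (-(ζ / (p - 1) * t ^ (-(q / p))) * s ^ q) *
            (-(ζ / (p - 1) * t ^ (-(q / p))) * (q * s ^ (q - 1))))) s := by
    intro s hs
    have h1 : HasDerivAt (fun s' : ℝ => s' ^ q) (q * s ^ (q - 1)) s :=
      Real.hasDerivAt_rpow_const (Or.inr hq1)
    have h2 := ((h1.const_mul (-(ζ / (p - 1) * t ^ (-(q / p))))).exp).const_mul
      ((t ^ (-α / p)) ^ (1 / (p - 1)))
    exact h2.congr_of_eventuallyEq <|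
      (eventually_gt_nhds hs).mono fun x hx => hUform x hx
  have hDerivInner : ∀ s : ℝ, 0 < s →
      deriv (fun s' => (u s' t) ^ (1 / (p - 1))) s =
        (t ^ (-α / p)) ^ (1 / (p - 1)) *
          (Real.exp (-(ζ / (p - 1) * t ^ (-(q / p))) * s ^ q) *
            (-(ζ / (p - 1) * t ^ (-(q / p))) * (q * s ^ (q - 1)))) :=
    fun s hs => (hInner s hs).deriv
  -- closed form of the outer function
  have hOuter : ∀ s : ℝ, 0 < s →
      s ^ (α - 1) * (-(deriv (fun s' => (u s' t) ^ (1 / (p - 1))) s)) ^ (p - 1) =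
        t ^ (-α / p) * t⁻¹ / p * (s ^ α * Real.exp (-(ζ * t ^ (-(q / p))) * s ^ q)) := by
    intro s hs
    rw [hDerivInner s hs]
    have hflat : -((t ^ (-α / p)) ^ (1 / (p - 1)) *
          (Real.exp (-(ζ / (p - 1) * t ^ (-(q / p))) * s ^ q) *
            (-(ζ / (p - 1) * t ^ (-(q / p))) * (q * s ^ (q - 1))))) =
        (t ^ (-α / p)) ^ (1 / (p - 1)) *
          Real.exp (-(ζ / (p - 1) * t ^ (-(q / p))) * s ^ q) *
          (ζ / (p - 1) * q) * t ^ (-(q / p)) * s ^ (q - 1) := by ring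
    rw [hflat]
    rw [mul_rpow (by positivity) (rpow_nonneg hs.le _),
      mul_rpow (by positivity) (rpow_nonneg ht.le _),
      mul_rpow (by positivity) (by positivity),
      mul_rpow (by positivity) (exp_pos _).le]
    have c1 : ((t ^ (-α / p)) ^ (1 / (p - 1))) ^ (p - 1) = t ^ (-α / p) := by
      rw [← rpow_mul (rpow_nonneg ht.le _), show 1 / (p - 1) * (p - 1) = 1 by field_simp,
        rpow_one]
    have c2 : (Real.exp (-(ζ / (p - 1) * t ^ (-(q / p))) * s ^ q)) ^ (p - 1) =
        Real.exp (-(ζ * t ^ (-(q / p))) * s ^ q) := by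
      rw [← exp_mul]
      congr 1
      field_simp
    have c3 : (ζ / (p - 1) * q) ^ (p - 1) = p⁻¹ := by
      have : ζ / (p - 1) * q = p ^ (1 - q) := by
        rw [hζ, hq, show 1 - p / (p - 1) = -p / (p - 1) + 1 by ring,
          rpow_add hp0, rpow_one]
        field_simp
      rw [this, ← rpow_mul hp0.le, show (1 - q) * (p - 1) = -1 by rw [hq]; field_simp; try ring,
        rpow_neg_one]
    have c4 : (t ^ (-(q / p))) ^ (p - 1) = t⁻¹ := by
      rw [← rpow_mul ht.le, show -(q / p) * (p - 1) = -1 by rw [hq]; field_simp; try ring,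
        rpow_neg_one]
    have c5 : (s ^ (q - 1)) ^ (p - 1) = s := by
      rw [← rpow_mul hs.le, show (q - 1) * (p - 1) = 1 by rw [hq]; field_simp; try ring,
        rpow_one]
    rw [c1, c2, c3, c4, c5]
    have c6 : s ^ (α - 1) * s = s ^ α := by
      rw [← rpow_add_one hs.ne', show α - 1 + 1 = α by ring]
    calc s ^ (α - 1) * (t ^ (-α / p) * Real.exp (-(ζ * t ^ (-(q / p))) * s ^ q) * p⁻¹ * t⁻¹ * s)
        = (s ^ (α - 1) * s) * (t ^ (-α / p) * Real.exp (-(ζ * t ^ (-(q / p))) * s ^ q) * p⁻¹ * t⁻¹) := by ring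
      _ = t ^ (-α / p) * t⁻¹ / p * (s ^ α * Real.exp (-(ζ * t ^ (-(q / p))) * s ^ q)) := by
          rw [c6]; ring
  -- derivative of the outer closed form
  have hG : HasDerivAt
      (fun s => t ^ (-α / p) * t⁻¹ / p * (s ^ α * Real.exp (-(ζ * t ^ (-(q / p))) * s ^ q)))
      (t ^ (-α / p) * t⁻¹ / p *
        ((α * r ^ (α - 1)) * Real.exp (-(ζ * t ^ (-(q / p))) * r ^ q) +
          r ^ α * (Real.exp (-(ζ * t ^ (-(q / p))) * r ^ q) *
            (-(ζ * t ^ (-(q / p))) * (q * r ^ (q - 1)))))) r := by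
    have h1 : HasDerivAt (fun s : ℝ => s ^ α) (α * r ^ (α - 1)) r :=
      Real.hasDerivAt_rpow_const (Or.inl hr.ne')
    have h2 : HasDerivAt (fun s : ℝ => Real.exp (-(ζ * t ^ (-(q / p))) * s ^ q))
        (Real.exp (-(ζ * t ^ (-(q / p))) * r ^ q) * (-(ζ * t ^ (-(q / p))) * (q * r ^ (q - 1)))) r :=
      (((Real.hasDerivAt_rpow_const (Or.inr hq1)).const_mul _)).exp
    exact (h1.mul h2).const_mul _
  have hOuterDeriv : deriv (fun r' => r' ^ (α - 1) *
      (-(deriv (fun r'' => (u r'' t) ^ (1 / (p - 1))) r')) ^ (p - 1)) r =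
      t ^ (-α / p) * t⁻¹ / p *
        ((α * r ^ (α - 1)) * Real.exp (-(ζ * t ^ (-(q / p))) * r ^ q) +
          r ^ α * (Real.exp (-(ζ * t ^ (-(q / p))) * r ^ q) *
            (-(ζ * t ^ (-(q / p))) * (q * r ^ (q - 1))))) := by
    have heq : (fun r' => r' ^ (α - 1) *
        (-(deriv (fun r'' => (u r'' t) ^ (1 / (p - 1))) r')) ^ (p - 1)) =ᶠ[nhds r]
        (fun s => t ^ (-α / p) * t⁻¹ / p *
          (s ^ α * Real.exp (-(ζ * t ^ (-(q / p))) * s ^ q))) :=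
      (eventually_gt_nhds hr).mono fun x hx => hOuter x hx
    rw [heq.deriv_eq]
    exact hG.deriv
  -- derivative in t
  have hHeq : (fun t' => u r t') =ᶠ[nhds t]
      (fun t' => t' ^ (-α / p) * Real.exp (-(ζ * r ^ q) * t' ^ (-(q / p)))) :=
    (eventually_gt_nhds ht).mono fun t' ht' => by
      show u r t' = _
      rw [hu, hsplit r t' hr ht']
      congr 1
      ring
  have hH : HasDerivAt (fun t' => t' ^ (-α / p) * Real.exp (-(ζ * r ^ q) * t' ^ (-(q / p))))
      ((-α / p) * t ^ (-α / p - 1) * Real.exp (-(ζ * r ^ q) * t ^ (-(q / p))) +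
        t ^ (-α / p) * (Real.exp (-(ζ * r ^ q) * t ^ (-(q / p))) *
          (-(ζ * r ^ q) * (-(q / p) * t ^ (-(q / p) - 1))))) t := by
    have h1 : HasDerivAt (fun t' : ℝ => t' ^ (-α / p)) ((-α / p) * t ^ (-α / p - 1)) t :=
      Real.hasDerivAt_rpow_const (Or.inl ht.ne')
    have h2 : HasDerivAt (fun t' : ℝ => Real.exp (-(ζ * r ^ q) * t' ^ (-(q / p))))
        (Real.exp (-(ζ * r ^ q) * t ^ (-(q / p))) * (-(ζ * r ^ q) * (-(q / p) * t ^ (-(q / p) - 1)))) t :=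
      ((Real.hasDerivAt_rpow_const (Or.inl ht.ne')).const_mul _).exp
    exact h1.mul h2
  rw [hHeq.deriv_eq, hH.deriv, hOuterDeriv]
  -- final algebra
  have hE : Real.exp (-(ζ * r ^ q) * t ^ (-(q / p))) =
      Real.exp (-(ζ * t ^ (-(q / p))) * r ^ q) := by ring_nf
  rw [hE]
  have ht1 : t ^ (-α / p - 1) = t ^ (-α / p) * t⁻¹ := by
    rw [show -α / p - 1 = -α / p + -1 by ring, rpow_add ht, rpow_neg_one]
  have ht2 : t ^ (-(q / p) - 1) = t ^ (-(q / p)) * t⁻¹ := by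
    rw [show -(q / p) - 1 = -(q / p) + -1 by ring, rpow_add ht, rpow_neg_one]
  rw [ht1, ht2]
  have e1 : r ^ (1 - α) * r ^ (α - 1) = 1 := by
    rw [← rpow_add hr, show 1 - α + (α - 1) = 0 by ring, rpow_zero]
  have e2 : r ^ (1 - α) * (r ^ α * r ^ (q - 1)) = r ^ q := by
    rw [← rpow_add hr, ← rpow_add hr, show 1 - α + (α + (q - 1)) = q by ring]
  set E := Real.exp (-(ζ * t ^ (-(q / p))) * r ^ q)
  linear_combination
    (t ^ (-α / p) * t⁻¹ / p * α * E) * e1 -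
    (t ^ (-α / p) * t⁻¹ / p * ζ * t ^ (-(q / p)) * q * E) * e2
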